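/- For the Gaussian conditional path p_t(x|x₁) = N(x; t x₁, (1−t)² σ² I) on ℝ^d generated from prior N(0, σ² I) via linear interpolation, the conditional vector field u_t(x|x₁) = (x₁ − x)/(1−t) satisfies the continuity equation ∂_t p_t(x|x₁) + ∇·(p_t(x|x₁) u_t(x|x₁)) = 0 for t ∈ [0,1). -/

import Mathlib

open Real

/-- For the Gaussian conditional path `p_t(x|x₁) = N(x; t x₁, (1-t)² σ² I)` on `ℝ^d`,
the conditional vector field `u_t(x|x₁) = (x₁ - x)/(1-t)` satisfies the continuity
equation `∂_t p_t + ∇·(p_t u_t) = 0` for `t ∈ [0,1)`, where the divergence is the sum of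
the coordinate-wise partial derivatives of `p_t(·|x₁) u_t(·|x₁)`. -/
theorem gaussian_path_continuity_equation
    (d : ℕ) (σ : ℝ) (hσ : 0 < σ) (x₁ : EuclideanSpace ℝ (Fin d))
    (p : ℝ → EuclideanSpace ℝ (Fin d) → ℝ)
    (hp : ∀ t x, p t x = (2 * π * (1 - t) ^ 2 * σ ^ 2) ^ (-(d : ℝ) / 2) *
      Real.exp (-‖x - t • x₁‖ ^ 2 / (2 * (1 - t) ^ 2 * σ ^ 2))) :
    ∀ t ∈ Set.Ico (0 : ℝ) 1, ∀ x : EuclideanSpace ℝ (Fin d),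
      deriv (fun s => p s x) t +
        ∑ i, (fderiv ℝ (fun y : EuclideanSpace ℝ (Fin d) =>
          p t y * ((1 - t)⁻¹ * (x₁ i - y i))) x) (EuclideanSpace.single i 1) = 0 := by
  intro t ht x
  obtain ⟨ht0, ht1⟩ := ht
  have ha : (0:ℝ) < 1 - t := by linarith
  have ha' : (1:ℝ) - t ≠ 0 := ne_of_gt ha
  have hσ' : σ ≠ 0 := ne_of_gt hσ
  have hu0 : (0:ℝ) < 2 * π * (1 - t) ^ 2 * σ ^ 2 := by positivity
  have hB0 : (0:ℝ) < 2 * (1 - t) ^ 2 * σ ^ 2 := by positivity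
  set X2 : ℝ := ‖x‖ ^ 2 with hX2
  set W : ℝ := (inner ℝ x x₁ : ℝ) with hW
  set Y2 : ℝ := ‖x₁‖ ^ 2 with hY2
  have hnorm : ∀ s : ℝ, ‖x - s • x₁‖ ^ 2 = X2 - 2*s*W + s^2*Y2 := by
    intro s
    rw [norm_sub_sq_real, real_inner_smul_right, norm_smul, Real.norm_eq_abs, mul_pow, sq_abs]
    ring
  -- abbreviations
  set C : ℝ := (2 * π * (1 - t) ^ 2 * σ ^ 2) ^ (-(d : ℝ) / 2) with hC
  set E : ℝ := Real.exp (-(X2 - 2*t*W + t^2*Y2) / (2 * (1 - t) ^ 2 * σ ^ 2)) with hE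
  ------------------------------------------------------------------
  -- Part 1 : time derivative
  ------------------------------------------------------------------
  have h1s : HasDerivAt (fun s : ℝ => 1 - s) (-1) t := by
    simpa using (hasDerivAt_id t).const_sub 1
  have hu' := ((h1s.pow 2).const_mul (2*π)).mul_const (σ^2)
  have hC' := hu'.rpow_const (p := -(d:ℝ)/2)
    (Or.inl (show (2*π*(1-t)^2*σ^2) ≠ 0 from ne_of_gt hu0))
  have hn : HasDerivAt (fun s : ℝ => -(X2 - 2*s*W + s^2*Y2))
      (-((0:ℝ) - 2*1*W + 2*t^1*Y2)) t :=
    (((hasDerivAt_const t X2).sub (((hasDerivAt_id t).const_mul 2).mul_const W)).add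
      ((hasDerivAt_pow 2 t).mul_const Y2)).neg
  have hm := ((h1s.pow 2).const_mul (2:ℝ)).mul_const (σ^2)
  have hg := hn.div hm (ne_of_gt hB0)
  have hD := hC'.mul hg.exp
  have hpfun : (fun s : ℝ => p s x) = (fun s : ℝ =>
      (2*π*(1-s)^2*σ^2) ^ (-(d:ℝ)/2) *
        Real.exp (-(X2 - 2*s*W + s^2*Y2) / (2*(1-s)^2*σ^2))) := by
    funext s
    rw [hp s x, hnorm s]
  rw [hpfun, HasDerivAt.deriv (f := fun s : ℝ => (2*π*(1-s)^2*σ^2) ^ (-(d:ℝ)/2) *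
        Real.exp (-(X2 - 2*s*W + s^2*Y2) / (2*(1-s)^2*σ^2))) hD]
  ------------------------------------------------------------------
  -- Part 2 : divergence term
  ------------------------------------------------------------------
  set B : ℝ := 2 * (1 - t) ^ 2 * σ ^ 2 with hB
  have hp' : ∀ y : EuclideanSpace ℝ (Fin d),
      p t y = C * Real.exp (-‖y - t • x₁‖ ^ 2 * B⁻¹) := by
    intro y
    rw [hp t y, ← hC, ← hB, div_eq_mul_inv (-‖y - t • x₁‖ ^ 2)]
  have hExB : Real.exp (-‖x - t • x₁‖ ^ 2 * B⁻¹) = E := by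
    rw [hnorm t, hE, div_eq_mul_inv]
  have key : ∀ i : Fin d,
      (fderiv ℝ (fun y : EuclideanSpace ℝ (Fin d) =>
          p t y * ((1 - t)⁻¹ * (x₁ i - y i))) x) (EuclideanSpace.single i 1)
      = (C * E) * ((1-t)⁻¹ * (-1))
        + ((1-t)⁻¹ * (x₁ i - x i)) * (C * (E * (-(2 * (x i - t * x₁ i)) * B⁻¹))) := by
    intro i
    have h1 : HasFDerivAt (fun y : EuclideanSpace ℝ (Fin d) => y - t • x₁)
        (ContinuousLinearMap.id ℝ (EuclideanSpace ℝ (Fin d))) x :=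
      (hasFDerivAt_id x).sub_const _
    have hGfull := (((h1.norm_sq.neg).mul_const B⁻¹).exp).const_mul C
    have hproj : HasFDerivAt (fun y : EuclideanSpace ℝ (Fin d) => y i)
        (EuclideanSpace.proj i : EuclideanSpace ℝ (Fin d) →L[ℝ] ℝ) x :=
      (EuclideanSpace.proj i : EuclideanSpace ℝ (Fin d) →L[ℝ] ℝ).hasFDerivAt
    have hlin := (hproj.const_sub (x₁ i)).const_mul ((1-t)⁻¹)
    have hF := hGfull.mul hlin
    have : (fun y : EuclideanSpace ℝ (Fin d) => p t y * ((1 - t)⁻¹ * (x₁ i - y i)))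
        = (fun y : EuclideanSpace ℝ (Fin d) =>
            C * Real.exp (-‖y - t • x₁‖ ^ 2 * B⁻¹) * ((1 - t)⁻¹ * (x₁ i - y i))) := by
      funext y; rw [hp' y]
    rw [this, HasFDerivAt.fderiv (f := fun y : EuclideanSpace ℝ (Fin d) =>
            C * Real.exp (-‖y - t • x₁‖ ^ 2 * B⁻¹) * ((1 - t)⁻¹ * (x₁ i - y i))) hF]
    simp only [ContinuousLinearMap.add_apply, ContinuousLinearMap.coe_smul',
      Pi.smul_apply, ContinuousLinearMap.comp_apply, ContinuousLinearMap.neg_apply,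
      ContinuousLinearMap.id_apply, ContinuousLinearMap.smul_apply, innerSL_apply_apply,
      smul_eq_mul, PiLp.proj_apply, EuclideanSpace.single_apply, eq_self_iff_true, if_true,
      Pi.neg_apply, nsmul_eq_mul]
    rw [hExB]
    have hvi : (inner ℝ (x - t • x₁) (EuclideanSpace.single i (1:ℝ)) : ℝ) = x i - t * x₁ i := by
      simp [EuclideanSpace.inner_single_right, PiLp.sub_apply, PiLp.smul_apply]
    rw [hvi]
    ring
  have hWs : W = ∑ i, x i * x₁ i := by
    rw [hW]; simp [PiLp.inner_apply, RCLike.inner_apply, conj_trivial]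
    exact Finset.sum_congr rfl fun i _ => mul_comm _ _
  have hXs : X2 = ∑ i, x i * x i := by
    rw [hX2, ← real_inner_self_eq_norm_sq]
    simp [PiLp.inner_apply, RCLike.inner_apply, conj_trivial]
    rw [EuclideanSpace.real_norm_sq_eq]; simp [sq]
  have hYs : Y2 = ∑ i, x₁ i * x₁ i := by
    rw [hY2, ← real_inner_self_eq_norm_sq]
    simp [PiLp.inner_apply, RCLike.inner_apply, conj_trivial]
    rw [EuclideanSpace.real_norm_sq_eq]; simp [sq]
  have hsums : ∑ i, ((1-t)⁻¹ * (x₁ i - x i)) * (C * (E * (-(2 * (x i - t * x₁ i)) * B⁻¹)))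
      = ((1-t)⁻¹ * C * E * (-2) * B⁻¹) * ((W - t*Y2) - (X2 - t*W)) := by
    have step1 : ∑ i, ((1-t)⁻¹ * (x₁ i - x i)) * (C * (E * (-(2 * (x i - t * x₁ i)) * B⁻¹)))
        = ∑ i, ((1-t)⁻¹ * C * E * (-2) * B⁻¹) *
            ((x i * x₁ i - t * (x₁ i * x₁ i)) - (x i * x i - t * (x i * x₁ i))) :=
      Finset.sum_congr rfl fun i _ => by ring
    rw [step1, ← Finset.mul_sum]
    congr 1
    rw [Finset.sum_sub_distrib, Finset.sum_sub_distrib, Finset.sum_sub_distrib,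
      ← Finset.mul_sum, ← Finset.mul_sum, ← hWs, ← hXs, ← hYs]
  have hsum : ∑ i, (fderiv ℝ (fun y : EuclideanSpace ℝ (Fin d) =>
        p t y * ((1 - t)⁻¹ * (x₁ i - y i))) x) (EuclideanSpace.single i 1)
      = (d:ℝ) * ((C * E) * ((1-t)⁻¹ * (-1)))
        + ((1-t)⁻¹ * C * E * (-2) * B⁻¹) * ((W - t*Y2) - (X2 - t*W)) := by
    rw [Finset.sum_congr rfl (fun i _ => key i), Finset.sum_add_distrib, Finset.sum_const,
      Finset.card_univ, Fintype.card_fin, nsmul_eq_mul, hsums]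
  rw [hsum]
  simp only [Pi.pow_apply, Pi.div_apply]
  rw [Real.rpow_sub_one (ne_of_gt hu0), ← hC, ← hE]
  rw [hB] at *
  field_simp
  ring
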